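/- Fix A > 0, an integer k ≥ 1, and a real q > (k+1)/(2k). For each n let r_n = n^{−q} and let G(n, r_n, A) be the random geometric graph on the flat torus T²_A with n i.i.d. uniform points and radius r_n. Then the expected Betti number E[β_{k,k}(G(n, r_n, A))] tends to 0 as n → ∞, where β_{k,k}(G) is the rank of the eulerian magnitude homology group EMH_{k,k}(G). -/

import Mathlib

open scoped Classical

variable {V : Type*}

/-- Length of the walk described by a list of landmarks: sum of path-metric
distances between consecutive entries (`⊤`-valued if some pair is unreachable). -/
noncomputable def mlen (G : SimpleGraph V) : List V → ℕ∞
  | [] => 0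
  | [_] => 0
  | a :: b :: t => G.edist a b + mlen G (b :: t)

/-- A list of landmarks is a trail if consecutive entries are distinct and reachable. -/
def IsTrailList (G : SimpleGraph V) (l : List V) : Prop :=
  l.Chain' fun a b => a ≠ b ∧ G.Reachable a b

/-- `trails G k ℓ` is the set `T_{k,ℓ}(G)` of `k`-trails of length `ℓ`,
encoded as lists with `k+1` entries. -/
def trails (G : SimpleGraph V) (k ℓ : ℕ) : Set (List V) :=
  {l | l.length = k + 1 ∧ IsTrailList G l ∧ mlen G l = (ℓ : ℕ∞)}

/-- `etrails G k ℓ` is the set `ET_{k,ℓ}(G)` of eulerian `k`-trails of length `ℓ`. -/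
def etrails (G : SimpleGraph V) (k ℓ : ℕ) : Set (List V) :=
  {l | l ∈ trails G k ℓ ∧ l.Nodup}

/-- Boundary of a single generator: `∂_{·,ℓ}(x₀,…,x_k) = Σ_{i=1}^{k-1} (-1)^i ∂^i`,
where `∂^i` deletes the `i`-th landmark if this does not change the length. -/
noncomputable def bdryElt (G : SimpleGraph V) (ℓ : ℕ) (l : List V) : List V →₀ ℤ :=
  ∑ i ∈ Finset.Ioo 0 (l.length - 1),
    if mlen G (l.eraseIdx i) = (ℓ : ℕ∞) then ((-1 : ℤ) ^ i) • Finsupp.single (l.eraseIdx i) 1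
    else 0

/-- The magnitude differential (length parameter `ℓ`) on the ambient free abelian group
on all landmark lists.  Its restriction to `MC_{k,ℓ}(G)` (chains supported on
`trails G k ℓ`) is `∂_{k,ℓ}`. -/
noncomputable def bdry (G : SimpleGraph V) (ℓ : ℕ) : (List V →₀ ℤ) →ₗ[ℤ] (List V →₀ ℤ) :=
  Finsupp.lsum ℤ fun l => LinearMap.toSpanSingleton ℤ _ (bdryElt G ℓ l)

/-- `MC_{k,ℓ}(G)`: the free abelian group on `T_{k,ℓ}(G)`, realized as the submodule of
finitely supported `ℤ`-valued functions supported on trails. -/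
noncomputable def MC (G : SimpleGraph V) (k ℓ : ℕ) : Submodule ℤ (List V →₀ ℤ) :=
  Finsupp.supported ℤ ℤ (trails G k ℓ)

/-- `EMC_{k,ℓ}(G)`: the free abelian group on `ET_{k,ℓ}(G)`. -/
noncomputable def EMC (G : SimpleGraph V) (k ℓ : ℕ) : Submodule ℤ (List V →₀ ℤ) :=
  Finsupp.supported ℤ ℤ (etrails G k ℓ)

/-- `EMH_{k,k}(G) = ker(∂_{k,k}|_{EMC_{k,k}(G)})`, the first-diagonal eulerian magnitude
homology group (`EMC_{k+1,k}(G) = 0`, so homology is just the kernel). -/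
noncomputable def EMHkk (G : SimpleGraph V) (k : ℕ) : Submodule ℤ (List V →₀ ℤ) :=
  EMC G k k ⊓ LinearMap.ker (bdry G k)

/-- `MH_{k,k}(G) = ker(∂_{k,k}|_{MC_{k,k}(G)})`. -/
noncomputable def MHkk (G : SimpleGraph V) (k : ℕ) : Submodule ℤ (List V →₀ ℤ) :=
  MC G k k ⊓ LinearMap.ker (bdry G k)

/-- `β_{k,k}(G)`, the rank of `EMH_{k,k}(G)`. -/
noncomputable def emBetti (G : SimpleGraph V) (k : ℕ) : ℕ :=
  Module.finrank ℤ (EMHkk G k)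

/-- `c(G,H)`: the number of vertex subsets of `G` whose induced subgraph is isomorphic
to `H`. -/
noncomputable def subgraphCount (G : SimpleGraph V) {W : Type*} (H : SimpleGraph W) : ℕ :=
  Set.ncard {s : Set V | Nonempty ((G.induce s) ≃g H)}

open MeasureTheory
open scoped ENNReal

/-- The flat-torus distance on `ℝ²` for the torus `T²_A = ℝ²/(√A·ℤ²)`:
`d_T(x,y) = min_{w ∈ √A·ℤ²} ‖x - y - w‖` (Euclidean norm). -/
noncomputable def torusDist (A : ℝ) (x y : EuclideanSpace ℝ (Fin 2)) : ℝ :=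
  ⨅ w : ℤ × ℤ, ‖x - y - Real.sqrt A • (WithLp.equiv 2 (Fin 2 → ℝ)).symm ![(w.1 : ℝ), (w.2 : ℝ)]‖

/-- The fundamental domain `[0,√A)²` of the torus `T²_A`. -/
def torusBox (A : ℝ) : Set (EuclideanSpace ℝ (Fin 2)) :=
  {x | ∀ i, x i ∈ Set.Ico (0 : ℝ) (Real.sqrt A)}

/-- The uniform (normalized Haar) probability measure on `T²_A`, realized as the
normalized Lebesgue measure on the fundamental domain `[0,√A)²`. -/
noncomputable def torusUnif (A : ℝ) : Measure (EuclideanSpace ℝ (Fin 2)) :=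
  (ENNReal.ofReal A)⁻¹ • volume.restrict (torusBox A)

/-- The random geometric graph on `n` sampled points of `T²_A` with radius `ρ`:
distinct `i, j` are adjacent iff `d_T(p_i, p_j) ≤ ρ`. -/
noncomputable def rggGraph (A ρ : ℝ) {n : ℕ} (P : Fin n → EuclideanSpace ℝ (Fin 2)) :
    SimpleGraph (Fin n) :=
  SimpleGraph.fromRel fun i j => torusDist A (P i) (P j) ≤ ρ

/-- The law of `n` i.i.d. uniform points on `T²_A`. -/
noncomputable def rggSample (A : ℝ) (n : ℕ) :
    Measure (Fin n → EuclideanSpace ℝ (Fin 2)) :=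
  Measure.pi fun _ => torusUnif A



section AuxProofs

lemma mlen_ge (G : SimpleGraph V) : ∀ (l : List V), IsTrailList G l →
    ((l.length - 1 : ℕ) : ℕ∞) ≤ mlen G l
  | [] , _ => by simp [mlen]
  | [a], _ => by simp [mlen]
  | a :: b :: t, h => by
    rw [IsTrailList, List.Chain', List.isChain_cons_cons] at h
    have h1 : (1 : ℕ∞) ≤ G.edist a b := by
      rw [ENat.one_le_iff_ne_zero]
      exact (SimpleGraph.edist_pos_of_ne h.1.1).ne'
    have h2 := mlen_ge G (b :: t) h.2
    simp only [mlen, List.length_cons, Nat.add_sub_cancel] at *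
    calc ((t.length + 1 : ℕ) : ℕ∞) = 1 + (t.length : ℕ) := by push_cast; ring
    _ ≤ G.edist a b + mlen G (b :: t) := add_le_add h1 h2

lemma chain_adj (G : SimpleGraph V) : ∀ (l : List V), IsTrailList G l →
    mlen G l = ((l.length - 1 : ℕ) : ℕ∞) → l.Chain' G.Adj
  | [] , _, _ => List.isChain_nil
  | [a], _, _ => List.isChain_singleton a
  | a :: b :: t, h, hm => by
    rw [IsTrailList, List.Chain', List.isChain_cons_cons] at h
    have h1 : (1 : ℕ∞) ≤ G.edist a b := by
      rw [ENat.one_le_iff_ne_zero]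
      exact (SimpleGraph.edist_pos_of_ne h.1.1).ne'
    have h2 := mlen_ge G (b :: t) h.2
    simp only [mlen, List.length_cons, Nat.add_sub_cancel] at *
    have he : G.edist a b = 1 := by
      by_contra hne
      have h3 : (2 : ℕ∞) ≤ G.edist a b := by
        rcases (lt_or_eq_of_le h1) with h' | h'
        · exact Order.add_one_le_of_lt h'
        · exact absurd h'.symm hne
      have : ((t.length + 2 : ℕ) : ℕ∞) ≤ ((t.length + 1 : ℕ) : ℕ∞) := by
        calc ((t.length + 2 : ℕ) : ℕ∞) = 2 + (t.length : ℕ) := by push_cast; ring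
        _ ≤ G.edist a b + mlen G (b :: t) := add_le_add h3 h2
        _ = ((t.length + 1 : ℕ) : ℕ∞) := hm
      have := Nat.cast_le.mp this
      omega
    rw [List.Chain', List.isChain_cons_cons]
    refine ⟨SimpleGraph.edist_eq_one_iff_adj.mp he, ?_⟩
    apply chain_adj G (b :: t) h.2
    rw [he] at hm
    have : mlen G (b :: t) = ((t.length : ℕ) : ℕ∞) := by
      have := hm
      rw [show ((t.length + 1 : ℕ) : ℕ∞) = 1 + (t.length : ℕ) by push_cast; ring] at this
      exact WithTop.add_left_cancel (by exact ENat.one_ne_top) this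
    simpa using this

-- finiteness of etrails
lemma etrails_finite [Finite V] (G : SimpleGraph V) (k ℓ : ℕ) : (etrails G k ℓ).Finite := by
  apply (List.finite_length_eq V (k+1)).subset
  rintro l ⟨⟨h1, -, -⟩, -⟩; exact h1


lemma emBetti_le_ncard [Finite V] (G : SimpleGraph V) (k : ℕ) :
    emBetti G k ≤ (etrails G k k).ncard := by
  classical
  have hfin : (etrails G k k).Finite := etrails_finite G k k
  haveI : Fintype (etrails G k k) := hfin.fintype
  -- EMC has finrank = card
  let e : EMC G k k ≃ₗ[ℤ] (etrails G k k →₀ ℤ) := Finsupp.supportedEquivFinsupp _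
  haveI : Module.Finite ℤ (EMC G k k) := Module.Finite.equiv e.symm
  have h1 : Module.finrank ℤ (EMC G k k) = (etrails G k k).ncard := by
    rw [e.finrank_eq, Module.finrank_finsupp_self, Set.ncard_eq_toFinset_card',
      Set.toFinset_card]
  have hle : EMHkk G k ≤ EMC G k k := inf_le_left
  have h2 : Module.finrank ℤ (EMHkk G k) ≤ Module.finrank ℤ (EMC G k k) :=
    LinearMap.finrank_le_finrank_of_injective (Submodule.inclusion_injective hle)
  rw [emBetti, ← h1] at *
  exact h2


lemma pi_fintype_irrel {δ : Type*} (i1 i2 : Fintype δ) {α : δ → Type*}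
    [∀ d, MeasurableSpace (α d)] (μf : ∀ d, MeasureTheory.Measure (α d)) :
    @MeasureTheory.Measure.pi δ α i1 _ μf = @MeasureTheory.Measure.pi δ α i2 _ μf := by
  rw [Subsingleton.elim i1 i2]

lemma chain_bound {E : Type*} [MeasurableSpace E] (μ : Measure E) [IsProbabilityMeasure μ]
    (D : E → E → Prop) (hD : MeasurableSet {p : E × E | D p.1 p.2}) (ε : ℝ≥0∞)
    (hb : ∀ x, μ {y | D x y} ≤ ε) :
    ∀ (m : ℕ) (ι : Type) [Fintype ι] (t : Fin (m + 1) → ι), Function.Injective t →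
      (Measure.pi fun _ : ι => μ) {P | ∀ j : Fin m, D (P (t j.castSucc)) (P (t j.succ))}
        ≤ ε ^ m := by
  intro m
  induction m with
  | zero =>
    intro ι _ t ht
    simpa using measure_le_one (μ := Measure.pi fun _ : ι => μ) _
  | succ m IH =>
    intro ι _ t ht
    set i : ι := t (Fin.last (m + 1)) with hi_def
    have hsec : ∀ x : E, MeasurableSet {y | D x y} := fun x =>
      measurable_prodMk_left hD
    set A : Set (ι → E) :=
      {P | ∀ j : Fin (m + 1), D (P (t j.castSucc)) (P (t j.succ))} with hA_def
    have hAm : MeasurableSet A := by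
      have : A = ⋂ j : Fin (m + 1), {P : ι → E | D (P (t j.castSucc)) (P (t j.succ))} := by
        ext P; simp [hA_def]
      rw [this]
      refine MeasurableSet.iInter fun j => ?_
      have hme : Measurable fun P : ι → E => (P (t j.castSucc), P (t j.succ)) :=
        (measurable_pi_apply _).prodMk (measurable_pi_apply _)
      exact hme hD
    set p : ι → Prop := fun x => x ≠ i with hp_def
    haveI : ∀ x, Decidable (p x) := fun x => Classical.propDecidable _
    set e := MeasurableEquiv.piEquivPiSubtypeProd (fun _ : ι => E) p with he_def
    have hmp := measurePreserving_piEquivPiSubtypeProd (fun _ : ι => μ) p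
    set μ₁ : Measure ({x // p x} → E) := Measure.pi fun _ => μ with hμ₁
    set μ₂ : Measure ({x // ¬ p x} → E) := Measure.pi fun _ => μ with hμ₂
    set T : Set (({x // p x} → E) × ({x // ¬ p x} → E)) := e.symm ⁻¹' A with hT_def
    have hTm : MeasurableSet T := e.symm.measurable hAm
    have hAT : A = e ⁻¹' T := by
      rw [hT_def, ← Set.preimage_comp]
      simp [MeasurableEquiv.symm_comp_self]
    have key : (Measure.pi fun _ : ι => μ) A = (μ₁.prod μ₂) T := by
      rw [hAT]
      exact hmp.measure_preimage hTm.nullMeasurableSet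
    rw [key, Measure.prod_apply hTm]
    have hnp_i : ¬ p i := by simp [hp_def]
    have hne_last : ∀ j : Fin (m + 1), p (t j.castSucc) := by
      intro j
      simp only [hp_def, hi_def, ne_eq]
      intro hEq
      exact absurd (ht hEq) (Fin.ne_of_lt (Fin.castSucc_lt_last j))
    -- values of e.symm
    have hval : ∀ (a : {x // p x} → E) (b : {x // ¬ p x} → E) (x : ι) (h : p x),
        e.symm (a, b) x = a ⟨x, h⟩ := by
      intro a b x h
      show (if h : p x then a ⟨x, h⟩ else b ⟨x, h⟩) = a ⟨x, h⟩
      rw [dif_pos h]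
    have hvali : ∀ (a : {x // p x} → E) (b : {x // ¬ p x} → E),
        e.symm (a, b) i = b ⟨i, hnp_i⟩ := by
      intro a b
      show (if h : p i then a ⟨i, h⟩ else b ⟨i, h⟩) = b ⟨i, hnp_i⟩
      rw [dif_neg hnp_i]
    -- the reindexed tuple
    set t' : Fin (m + 1) → {x // p x} := fun j => ⟨t j.castSucc, hne_last j⟩ with ht'_def
    set C : Set ({x // p x} → E) :=
      {a | ∀ j : Fin m, D (a (t' j.castSucc)) (a (t' j.succ))} with hC_def
    have hCm : MeasurableSet C := by
      have : C = ⋂ j : Fin m,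
          {a : {x // p x} → E | D (a (t' j.castSucc)) (a (t' j.succ))} := by
        ext a; simp [hC_def]
      rw [this]
      refine MeasurableSet.iInter fun j => ?_
      have hme : Measurable fun a : {x // p x} → E => (a (t' j.castSucc), a (t' j.succ)) :=
        (measurable_pi_apply _).prodMk (measurable_pi_apply _)
      exact hme hD
    have hslice : ∀ a : {x // p x} → E,
        μ₂ (Prod.mk a ⁻¹' T) ≤ C.indicator (fun _ => ε) a := by
      intro a
      by_cases hC : a ∈ C
      · rw [Set.indicator_of_mem hC]
        have hsub : (Prod.mk a ⁻¹' T) ⊆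
            {b | D (a (t' (Fin.last m))) (b ⟨i, hnp_i⟩)} := by
          intro b hb
          have h0 := hb (Fin.last m)
          have h1 : D (e.symm (a, b) (t ((Fin.last m).castSucc))) (e.symm (a, b) i) := h0
          rw [hval a b _ (hne_last _), hvali a b] at h1
          exact h1
        refine le_trans (measure_mono hsub) ?_
        haveI hu : Unique {x // ¬ p x} := ⟨⟨⟨i, hnp_i⟩⟩, by
          rintro ⟨x, hx⟩
          simp only [hp_def, not_not] at hx
          exact Subtype.ext hx⟩
        set x₀ := a (t' (Fin.last m))
        have hmp2 := measurePreserving_funUnique μ ({x // ¬ p x})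
        have hset : {b : {x // ¬ p x} → E | D x₀ (b ⟨i, hnp_i⟩)} =
            (MeasurableEquiv.funUnique {x // ¬ p x} E) ⁻¹' {y | D x₀ y} := by
          ext b
          have h2 : (MeasurableEquiv.funUnique {x // ¬ p x} E) b = b ⟨i, hnp_i⟩ :=
            congrArg b (hu.uniq ⟨i, hnp_i⟩).symm
          simp only [Set.mem_setOf_eq, Set.mem_preimage, h2]
        rw [hμ₂, hset]
        have h3 := hmp2.measure_preimage (hsec x₀).nullMeasurableSet
        refine le_trans (le_of_eq ?_) (hb x₀)
        convert h3 using 2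
        exact pi_fintype_irrel _ _ _
      · rw [Set.indicator_of_notMem hC]
        have : (Prod.mk a ⁻¹' T) = ∅ := by
          ext b
          simp only [Set.mem_preimage, hT_def, hA_def, Set.mem_setOf_eq,
            Set.mem_empty_iff_false, iff_false]
          intro hall
          apply hC
          intro j
          have h0 := hall j.castSucc
          have h1 : D (e.symm (a, b) (t (j.castSucc.castSucc)))
              (e.symm (a, b) (t (j.castSucc.succ))) := h0
          rw [hval a b _ (hne_last _), hval a b _ (show p (t (j.castSucc.succ)) from
            Fin.succ_castSucc j ▸ hne_last j.succ)] at h1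
          exact h1
        rw [this]
        simp
    calc ∫⁻ a, μ₂ (Prod.mk a ⁻¹' T) ∂μ₁ ≤ ∫⁻ a, C.indicator (fun _ => ε) a ∂μ₁ :=
          lintegral_mono hslice
    _ = ε * μ₁ C := by rw [lintegral_indicator_const hCm]
    _ ≤ ε * ε ^ m := by
        gcongr
        have ht' : Function.Injective t' := by
          intro j j' hjj
          simp only [ht'_def, Subtype.mk.injEq] at hjj
          exact Fin.castSucc_injective _ (ht hjj)
        exact IH {x // p x} t' ht'
    _ = ε ^ (m + 1) := by ring


noncomputable abbrev latPt (A : ℝ) (w : ℤ × ℤ) : EuclideanSpace ℝ (Fin 2) :=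
  Real.sqrt A • (WithLp.equiv 2 (Fin 2 → ℝ)).symm ![(w.1 : ℝ), (w.2 : ℝ)]

lemma latPt_apply (A : ℝ) (w : ℤ × ℤ) (i : Fin 2) :
    latPt A w i = Real.sqrt A * ![(w.1 : ℝ), (w.2 : ℝ)] i := rfl

lemma torusDist_def (A : ℝ) (x y : EuclideanSpace ℝ (Fin 2)) :
    torusDist A x y = ⨅ w : ℤ × ℤ, ‖x - y - latPt A w‖ := rfl

lemma torusDist_symm (A : ℝ) (x y : EuclideanSpace ℝ (Fin 2)) :
    torusDist A x y = torusDist A y x := by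
  have key : ∀ u v : EuclideanSpace ℝ (Fin 2), torusDist A u v ≤ torusDist A v u := by
    intro u v
    rw [torusDist_def, torusDist_def]
    have hbdd : BddBelow (Set.range fun w : ℤ × ℤ => ‖u - v - latPt A w‖) :=
      ⟨0, by rintro s ⟨w, rfl⟩; exact norm_nonneg _⟩
    refine le_ciInf fun w => ?_
    have heq : ‖u - v - latPt A (-w)‖ = ‖v - u - latPt A w‖ := by
      have : latPt A (-w) = - latPt A w := by
        ext i
        rw [latPt_apply, PiLp.neg_apply, latPt_apply]
        fin_cases i <;> push_cast <;> simp <;> ring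
      rw [this, ← norm_neg]
      congr 1
      abel
    calc ⨅ w', ‖u - v - latPt A w'‖ ≤ ‖u - v - latPt A (-w)‖ := ciInf_le hbdd _
    _ = ‖v - u - latPt A w‖ := heq
  exact le_antisymm (key x y) (key y x)

lemma torusDist_measurable (A : ℝ) :
    Measurable (fun p : EuclideanSpace ℝ (Fin 2) × EuclideanSpace ℝ (Fin 2) =>
      torusDist A p.1 p.2) := by
  apply Measurable.iInf
  intro w
  exact (continuous_fst.sub continuous_snd |>.sub continuous_const).norm.measurable

lemma torusBox_measurable (A : ℝ) : MeasurableSet (torusBox A) := by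
  have : torusBox A = ⋂ i : Fin 2, (fun x : EuclideanSpace ℝ (Fin 2) => x i) ⁻¹'
      Set.Ico (0 : ℝ) (Real.sqrt A) := by
    ext x; simp [torusBox]
  rw [this]
  exact MeasurableSet.iInter fun i =>
    ((measurable_pi_apply i).comp (WithLp.measurable_ofLp 2 (Fin 2 → ℝ))) measurableSet_Ico

lemma torusBox_volume (A : ℝ) (hA : 0 < A) : volume (torusBox A) = ENNReal.ofReal A := by
  have hmp := EuclideanSpace.volume_preserving_symm_measurableEquiv_toLp (Fin 2)
  have hbox : torusBox A = (MeasurableEquiv.toLp 2 (Fin 2 → ℝ)).symm ⁻¹'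
      (Set.univ.pi fun _ : Fin 2 => Set.Ico (0 : ℝ) (Real.sqrt A)) := by
    ext x; simp [torusBox, Set.mem_pi]
  rw [hbox, hmp.measure_preimage
    ((MeasurableSet.univ_pi fun _ => measurableSet_Ico).nullMeasurableSet)]
  rw [volume_pi_pi]
  simp only [Real.volume_Ico, sub_zero]
  rw [Finset.prod_const, Finset.card_univ, Fintype.card_fin, ← ENNReal.ofReal_pow
    (Real.sqrt_nonneg A), sq, Real.mul_self_sqrt hA.le]

lemma torusUnif_isProbability (A : ℝ) (hA : 0 < A) : IsProbabilityMeasure (torusUnif A) := by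
  constructor
  rw [torusUnif, Measure.smul_apply, Measure.restrict_apply MeasurableSet.univ,
    Set.univ_inter, torusBox_volume A hA, smul_eq_mul,
    ENNReal.inv_mul_cancel (by simp [hA]) (by simp)]

lemma coord_le_norm (v : EuclideanSpace ℝ (Fin 2)) (i : Fin 2) : |v i| ≤ ‖v‖ := by
  rw [EuclideanSpace.norm_eq, ← Real.sqrt_sq_eq_abs (v i)]
  apply Real.sqrt_le_sqrt
  calc v i ^ 2 = ‖v i‖ ^ 2 := by rw [Real.norm_eq_abs, sq_abs]
  _ ≤ ∑ j, ‖v j‖ ^ 2 := Finset.single_le_sum (f := fun j => ‖v j‖ ^ 2) (fun j _ => sq_nonneg _) (Finset.mem_univ i)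

lemma torus_ball_bound (A : ℝ) (hA : 0 < A) (r : ℝ) (hr : 0 < r)
    (hr2 : 2 * r ≤ Real.sqrt A) (x : EuclideanSpace ℝ (Fin 2)) :
    torusUnif A {y | torusDist A x y ≤ r} ≤
      (ENNReal.ofReal A)⁻¹ * (16 * (ENNReal.ofReal ((2*r)^2) *
        volume (Metric.ball (0 : EuclideanSpace ℝ (Fin 2)) 1))) := by
  have hsA : 0 < Real.sqrt A := Real.sqrt_pos.mpr hA
  set m : Fin 2 → ℤ := fun i => ⌊x i / Real.sqrt A⌋ with hm
  set F : Finset (ℤ × ℤ) :=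
    (Finset.Icc (m 0 - 2) (m 0 + 1)) ×ˢ (Finset.Icc (m 1 - 2) (m 1 + 1)) with hF
  have hsub : {y | torusDist A x y ≤ r} ∩ torusBox A ⊆
      ⋃ w ∈ F, Metric.closedBall (x - latPt A w) (2*r) := by
    rintro y ⟨hy, hybox⟩
    have hlt : torusDist A x y < 2 * r := lt_of_le_of_lt hy (by linarith)
    rw [torusDist_def] at hlt
    obtain ⟨w, hw⟩ := exists_lt_of_ciInf_lt hlt
    have hcoord : ∀ i : Fin 2, |x i - y i - Real.sqrt A * ![(w.1 : ℝ), (w.2 : ℝ)] i| ≤ 2 * r := by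
      intro i
      have h1 : |(x - y - latPt A w) i| ≤ ‖x - y - latPt A w‖ := coord_le_norm _ i
      have h2 : (x - y - latPt A w) i = x i - y i - Real.sqrt A * ![(w.1:ℝ), (w.2:ℝ)] i := by
        rw [PiLp.sub_apply, PiLp.sub_apply, latPt_apply]
      rw [h2] at h1
      exact h1.trans hw.le
    have hbd : ∀ i : Fin 2, m i - 2 ≤ (![w.1, w.2] : Fin 2 → ℤ) i ∧
        (![w.1, w.2] : Fin 2 → ℤ) i ≤ m i + 1 := by
      intro i
      set wz : ℤ := (![w.1, w.2] : Fin 2 → ℤ) i with hwz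
      have hcast : ((wz : ℤ) : ℝ) = ![(w.1 : ℝ), (w.2 : ℝ)] i := by
        fin_cases i <;> simp [hwz]
      have habs := hcoord i
      rw [← hcast] at habs
      rw [abs_le] at habs
      have hy0 : 0 ≤ y i := (hybox i).1
      have hy1 : y i < Real.sqrt A := (hybox i).2
      have hfl : (m i : ℝ) ≤ x i / Real.sqrt A := Int.floor_le _
      have hfl2 : x i / Real.sqrt A < m i + 1 := Int.lt_floor_add_one _
      constructor
      · have : Real.sqrt A * wz ≥ x i - 2 * Real.sqrt A := by nlinarith
        have : (wz : ℝ) ≥ x i / Real.sqrt A - 2 := by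
          rw [ge_iff_le, sub_le_iff_le_add, div_le_iff₀ hsA]
          nlinarith
        have : ((m i - 2 : ℤ) : ℝ) ≤ (wz : ℝ) := by push_cast; linarith
        exact_mod_cast this
      · have : Real.sqrt A * wz ≤ x i + Real.sqrt A := by nlinarith
        have h3 : (wz : ℝ) ≤ x i / Real.sqrt A + 1 := by
          rw [show x i / Real.sqrt A + 1 = (x i + Real.sqrt A) / Real.sqrt A by field_simp,
            le_div_iff₀ hsA]
          nlinarith
        have h4 : ((wz : ℤ) : ℝ) < ((m i + 2 : ℤ) : ℝ) := by push_cast; linarith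
        have h5 : wz < m i + 2 := by exact_mod_cast h4
        omega
    have hwF : w ∈ F := by
      rw [hF, Finset.mem_product]
      constructor
      · rw [Finset.mem_Icc]
        have := hbd 0; simpa using this
      · rw [Finset.mem_Icc]
        have := hbd 1; simpa using this
    have hball : y ∈ Metric.closedBall (x - latPt A w) (2*r) := by
      rw [Metric.mem_closedBall, dist_eq_norm]
      have : y - (x - latPt A w) = -(x - y - latPt A w) := by abel
      rw [this, norm_neg]
      exact hw.le
    exact Set.mem_biUnion hwF hball
  have hcard : F.card = 16 := by
    have h4 : ∀ z : ℤ, (z + 1 + 1 - (z - 2)).toNat = 4 := by intro z; omega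
    rw [hF, Finset.card_product, Int.card_Icc, Int.card_Icc, h4, h4]
  calc torusUnif A {y | torusDist A x y ≤ r}
      = (ENNReal.ofReal A)⁻¹ * volume ({y | torusDist A x y ≤ r} ∩ torusBox A) := by
        rw [torusUnif, Measure.smul_apply, Measure.restrict_apply' (torusBox_measurable A),
          smul_eq_mul]
  _ ≤ (ENNReal.ofReal A)⁻¹ * volume (⋃ w ∈ F, Metric.closedBall (x - latPt A w) (2*r)) :=
        mul_le_mul_right (measure_mono hsub) _
  _ ≤ (ENNReal.ofReal A)⁻¹ * ∑ w ∈ F, volume (Metric.closedBall (x - latPt A w) (2*r)) :=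
        mul_le_mul_right (measure_biUnion_finset_le F _) _
  _ = (ENNReal.ofReal A)⁻¹ * ∑ w ∈ F, (ENNReal.ofReal ((2*r)^2) *
        volume (Metric.ball (0 : EuclideanSpace ℝ (Fin 2)) 1)) := by
        congr 1
        refine Finset.sum_congr rfl fun w _ => ?_
        rw [Measure.addHaar_closedBall _ _ (by linarith : (0:ℝ) ≤ 2*r),
          finrank_euclideanSpace_fin]
  _ = (ENNReal.ofReal A)⁻¹ * (16 * (ENNReal.ofReal ((2*r)^2) *
        volume (Metric.ball (0 : EuclideanSpace ℝ (Fin 2)) 1))) := by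
        rw [Finset.sum_const, hcard, nsmul_eq_mul]
        norm_num


lemma etrails_chain' (A ρ : ℝ) {n k : ℕ} (P : Fin n → EuclideanSpace ℝ (Fin 2))
    {l : List (Fin n)} (hl : l ∈ etrails (rggGraph A ρ P) k k) :
    l.Chain' (rggGraph A ρ P).Adj := by
  obtain ⟨⟨hlen, htr, hml⟩, hnd⟩ := hl
  apply chain_adj _ l htr
  rw [hlen]
  simpa using hml

lemma card_etrails_le (A ρ : ℝ) {n k : ℕ} (P : Fin n → EuclideanSpace ℝ (Fin 2)) :
    (etrails (rggGraph A ρ P) k k).ncard ≤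
      ((Finset.univ.filter (fun t : Fin (k+1) → Fin n => Function.Injective t)).filter
        (fun t => ∀ j : Fin k, torusDist A (P (t j.castSucc)) (P (t j.succ)) ≤ ρ)).card := by
  set s := etrails (rggGraph A ρ P) k k with hs
  rcases Set.eq_empty_or_nonempty s with he | ⟨l₀, hl₀⟩
  · simp [he]
  have hlen₀ : l₀.length = k + 1 := hl₀.1.1
  have hne₀ : l₀ ≠ [] := by intro h; rw [h] at hlen₀; simp at hlen₀
  set d : Fin n := l₀.head hne₀ with hd
  set F := ((Finset.univ.filter (fun t : Fin (k+1) → Fin n => Function.Injective t)).filter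
        (fun t => ∀ j : Fin k, torusDist A (P (t j.castSucc)) (P (t j.succ)) ≤ ρ)) with hF
  rw [← Set.ncard_coe_finset F]
  apply Set.ncard_le_ncard_of_injOn (fun l => fun j : Fin (k+1) => l.getD j.1 d)
  · intro l hl
    obtain ⟨⟨hlen, htr, hml⟩, hnd⟩ := hl
    have hget : ∀ j : Fin (k+1), l.getD j.1 d = l.get ⟨j.1, by rw [hlen]; exact j.2⟩ := by
      intro j
      rw [List.getD_eq_getElem l d (by rw [hlen]; exact j.2)]
      simp
    have hchain := etrails_chain' A ρ P (by exact ⟨⟨hlen, htr, hml⟩, hnd⟩)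
    rw [List.Chain', List.isChain_iff_getElem] at hchain
    simp only [Finset.mem_coe, hF, Finset.mem_filter, Finset.mem_univ, true_and]
    constructor
    · intro j1 j2 hj
      simp only [hget] at hj
      have := (List.nodup_iff_injective_get.mp hnd) hj
      simpa [Fin.ext_iff] using this
    · intro j
      have hadj := hchain j.1 (by rw [hlen]; simpa using j.2)
      simp only [rggGraph, SimpleGraph.fromRel_adj] at hadj
      have hdist : torusDist A (P (l.get ⟨j.1, by rw [hlen]; exact lt_of_lt_of_le j.2 (by omega)⟩))
          (P (l.get ⟨j.1 + 1, by rw [hlen]; omega⟩)) ≤ ρ := by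
        rcases hadj.2 with h | h
        · exact h
        · rw [torusDist_symm]; exact h
      simp only [hget]
      convert hdist using 4 <;> simp [Fin.ext_iff]
  · intro l1 h1 l2 h2 hf
    have hlen1 : l1.length = k + 1 := h1.1.1
    have hlen2 : l2.length = k + 1 := h2.1.1
    apply List.ext_getElem (by rw [hlen1, hlen2])
    intro i hi1 hi2
    have h5 := congrFun hf ⟨i, by rw [hlen1] at hi1; exact hi1⟩
    simp only at h5
    rw [List.getD_eq_getElem l1 d hi1, List.getD_eq_getElem l2 d hi2] at h5
    exact h5


lemma bettiCount_le (A ρ : ℝ) {n k : ℕ} (P : Fin n → EuclideanSpace ℝ (Fin 2)) :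
    emBetti (rggGraph A ρ P) k ≤
      ((Finset.univ.filter (fun t : Fin (k+1) → Fin n => Function.Injective t)).filter
        (fun t => ∀ j : Fin k, torusDist A (P (t j.castSucc)) (P (t j.succ)) ≤ ρ)).card :=
  le_trans (emBetti_le_ncard _ k) (card_etrails_le A ρ P)

lemma main_bound (A : ℝ) (hA : 0 < A) (k : ℕ) (ρ : ℝ) (hρ : 0 < ρ)
    (hρ2 : 2 * ρ ≤ Real.sqrt A) (n : ℕ) :
    ∫⁻ P, (emBetti (rggGraph A ρ P) k : ℝ≥0∞) ∂ rggSample A n ≤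
      (n : ℝ≥0∞) ^ (k+1) *
        ((ENNReal.ofReal A)⁻¹ * (16 * (ENNReal.ofReal ((2*ρ)^2) *
          volume (Metric.ball (0 : EuclideanSpace ℝ (Fin 2)) 1)))) ^ k := by
  haveI := torusUnif_isProbability A hA
  set E := EuclideanSpace ℝ (Fin 2)
  set μ := torusUnif A with hμ
  set ε := (ENNReal.ofReal A)⁻¹ * (16 * (ENNReal.ofReal ((2*ρ)^2) *
    volume (Metric.ball (0 : E) 1))) with hε
  set D : E → E → Prop := fun x y => torusDist A x y ≤ ρ with hDdef
  have hD : MeasurableSet {p : E × E | D p.1 p.2} := (torusDist_measurable A) measurableSet_Iic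
  have hb : ∀ x, μ {y | D x y} ≤ ε := fun x => torus_ball_bound A hA ρ hρ hρ2 x
  set finj := Finset.univ.filter (fun t : Fin (k+1) → Fin n => Function.Injective t) with hfinj
  have hSm : ∀ t : Fin (k+1) → Fin n, MeasurableSet
      {P : Fin n → E | ∀ j : Fin k, D (P (t j.castSucc)) (P (t j.succ))} := by
    intro t
    have : {P : Fin n → E | ∀ j : Fin k, D (P (t j.castSucc)) (P (t j.succ))} =
        ⋂ j : Fin k, {P : Fin n → E | D (P (t j.castSucc)) (P (t j.succ))} := by
      ext P; simp
    rw [this]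
    refine MeasurableSet.iInter fun j => ?_
    have hme : Measurable fun P : Fin n → E => (P (t j.castSucc), P (t j.succ)) :=
      (measurable_pi_apply _).prodMk (measurable_pi_apply _)
    exact hme hD
  have hpt : ∀ P : Fin n → E, (emBetti (rggGraph A ρ P) k : ℝ≥0∞) ≤
      ∑ t ∈ finj, Set.indicator
        {Q : Fin n → E | ∀ j : Fin k, D (Q (t j.castSucc)) (Q (t j.succ))} (fun _ => 1) P := by
    intro P
    have h2 := bettiCount_le A ρ (k := k) P
    calc (emBetti (rggGraph A ρ P) k : ℝ≥0∞)
        ≤ ((finj.filter (fun t => ∀ j : Fin k,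
            torusDist A (P (t j.castSucc)) (P (t j.succ)) ≤ ρ)).card : ℝ≥0∞) := by
          exact_mod_cast h2
    _ = ∑ t ∈ finj, (if ∀ j : Fin k, D (P (t j.castSucc)) (P (t j.succ)) then (1:ℝ≥0∞) else 0) := by
          rw [Finset.card_filter]
          push_cast
          refine Finset.sum_congr rfl fun t _ => ?_
          split <;> simp
    _ = _ := by
          refine Finset.sum_congr rfl fun t _ => ?_
          rw [Set.indicator_apply]
          rfl
  calc ∫⁻ P, (emBetti (rggGraph A ρ P) k : ℝ≥0∞) ∂ rggSample A n
      ≤ ∫⁻ P, (∑ t ∈ finj, Set.indicator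
          {Q : Fin n → E | ∀ j : Fin k, D (Q (t j.castSucc)) (Q (t j.succ))} (fun _ => 1) P)
          ∂ rggSample A n := lintegral_mono hpt
  _ = ∑ t ∈ finj, ∫⁻ P, Set.indicator
          {Q : Fin n → E | ∀ j : Fin k, D (Q (t j.castSucc)) (Q (t j.succ))} (fun _ => 1) P
          ∂ rggSample A n :=
        lintegral_finset_sum _ (fun t _ => (measurable_const.indicator (hSm t)))
  _ = ∑ t ∈ finj, rggSample A n
        {Q : Fin n → E | ∀ j : Fin k, D (Q (t j.castSucc)) (Q (t j.succ))} := by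
        refine Finset.sum_congr rfl fun t _ => ?_
        exact lintegral_indicator_const (hSm t) 1 |>.trans (one_mul _)
  _ ≤ ∑ t ∈ finj, ε ^ k := by
        refine Finset.sum_le_sum fun t ht => ?_
        have hinj : Function.Injective t := by
          rw [hfinj, Finset.mem_filter] at ht
          exact ht.2
        exact chain_bound μ D hD ε hb k (Fin n) t hinj
  _ = (finj.card : ℝ≥0∞) * ε ^ k := by rw [Finset.sum_const, nsmul_eq_mul]
  _ ≤ (n : ℝ≥0∞) ^ (k+1) * ε ^ k := by
        gcongr
        calc (finj.card : ℝ≥0∞) ≤ (Fintype.card (Fin (k+1) → Fin n) : ℝ≥0∞) := by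
              exact_mod_cast Finset.card_filter_le _ _
        _ = (n : ℝ≥0∞) ^ (k+1) := by
              rw [Fintype.card_fun, Fintype.card_fin, Fintype.card_fin]
              push_cast
              rfl


end AuxProofs

/-- Theorem 5.8, vanishing threshold for RGGs: fix `A > 0`, `k ≥ 1` and
`q > (k+1)/(2k)`.  With radius `r_n = n^{-q}`, the expected Betti number
`E[β_{k,k}(G(n, r_n, A))]` tends to `0` as `n → ∞`. -/
theorem rgg_expected_betti_tendsto_zero (A : ℝ) (hA : 0 < A) (k : ℕ) (hk : 1 ≤ k)
    (q : ℝ) (hq : ((k : ℝ) + 1) / (2 * (k : ℝ)) < q) :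
    Filter.Tendsto
      (fun n : ℕ => ∫⁻ P, (emBetti (rggGraph A ((n : ℝ) ^ (-q)) P) k : ℝ≥0∞)
        ∂ rggSample A n)
      Filter.atTop (nhds 0) := by
  set E := EuclideanSpace ℝ (Fin 2)
  set V₁ := volume (Metric.ball (0 : E) 1) with hV₁
  have hV₁top : V₁ ≠ ⊤ := (Metric.isBounded_ball.measure_lt_top).ne
  set K := (ENNReal.ofReal A)⁻¹ * (16 * (ENNReal.ofReal 4 * V₁)) with hK
  have hKtop : K ≠ ⊤ := by
    rw [hK]
    refine ENNReal.mul_ne_top ?_ (ENNReal.mul_ne_top (by simp) (ENNReal.mul_ne_top (by simp) hV₁top))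
    exact ENNReal.inv_ne_top.mpr (by simp [hA])
  set δ : ℝ := ((k : ℝ) + 1) - 2 * q * (k : ℝ) with hδ
  have hk0 : (0 : ℝ) < (k : ℝ) := by exact_mod_cast hk
  have hq0 : 0 < q := lt_trans (by positivity) hq
  have hδneg : δ < 0 := by
    have h2k : (0:ℝ) < 2 * (k:ℝ) := by positivity
    have := (div_lt_iff₀ h2k).mp hq
    rw [hδ]; nlinarith
  -- the dominating sequence
  set h : ℕ → ℝ≥0∞ := fun n => K ^ k * ENNReal.ofReal ((n : ℝ) ^ δ) with hh
  -- tendsto of powers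
  have hrpow : ∀ c : ℝ, c < 0 → Filter.Tendsto (fun n : ℕ => (n : ℝ) ^ c)
      Filter.atTop (nhds 0) := by
    intro c hc
    have h1 : Filter.Tendsto (fun x : ℝ => x ^ c) Filter.atTop (nhds 0) := by
      have := tendsto_rpow_neg_atTop (y := -c) (by linarith)
      simpa using this
    exact h1.comp tendsto_natCast_atTop_atTop
  have hhten : Filter.Tendsto h Filter.atTop (nhds 0) := by
    rw [hh]
    have h2 : Filter.Tendsto (fun n : ℕ => ENNReal.ofReal ((n : ℝ) ^ δ))
        Filter.atTop (nhds 0) := by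
      rw [show (0 : ℝ≥0∞) = ENNReal.ofReal 0 by simp]
      exact (ENNReal.continuous_ofReal.tendsto 0).comp (hrpow δ hδneg)
    have h3 := ENNReal.Tendsto.const_mul (a := K ^ k) h2 (Or.inr (ENNReal.pow_ne_top hKtop))
    simpa using h3
  -- eventual bound
  have hev : ∀ᶠ n : ℕ in Filter.atTop,
      ∫⁻ P, (emBetti (rggGraph A ((n : ℝ) ^ (-q)) P) k : ℝ≥0∞) ∂ rggSample A n ≤ h n := by
    have hev1 : ∀ᶠ n : ℕ in Filter.atTop, 1 ≤ n := Filter.eventually_ge_atTop 1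
    have hsA : 0 < Real.sqrt A := Real.sqrt_pos.mpr hA
    have hev2 : ∀ᶠ n : ℕ in Filter.atTop, (n : ℝ) ^ (-q) < Real.sqrt A / 2 :=
      (hrpow (-q) (by linarith)).eventually_lt_const (by positivity)
    filter_upwards [hev1, hev2] with n hn1 hn2
    have hn0 : (0 : ℝ) < (n : ℝ) := by exact_mod_cast hn1
    set ρ : ℝ := (n : ℝ) ^ (-q) with hρdef
    have hρ : 0 < ρ := Real.rpow_pos_of_pos hn0 _
    have hρ2 : 2 * ρ ≤ Real.sqrt A := by rw [hρdef]; linarith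
    refine le_trans (main_bound A hA k ρ hρ hρ2 n) (le_of_eq ?_)
    -- computation
    have e1 : ENNReal.ofReal ((2 * ρ) ^ 2) = ENNReal.ofReal 4 * ENNReal.ofReal (ρ ^ 2) := by
      rw [← ENNReal.ofReal_mul (by norm_num)]
      congr 1
      ring
    have e2 : (ρ : ℝ) ^ (2 : ℕ) = (n : ℝ) ^ (-(2 * q)) := by
      rw [hρdef, ← Real.rpow_natCast ((n : ℝ) ^ (-q)) 2, ← Real.rpow_mul hn0.le]
      norm_num
      ring_nf
    have e3 : (ENNReal.ofReal A)⁻¹ * (16 * (ENNReal.ofReal ((2*ρ)^2) * V₁)) =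
        K * ENNReal.ofReal ((n : ℝ) ^ (-(2 * q))) := by
      rw [e1, ← e2, hK]
      ring
    rw [e3, mul_pow, ← ENNReal.ofReal_pow (by positivity), ← Real.rpow_natCast ((n:ℝ) ^ (-(2*q))) k,
      ← Real.rpow_mul hn0.le]
    have e4 : ((n : ℝ≥0∞)) ^ (k + 1) = ENNReal.ofReal ((n : ℝ) ^ (((k : ℕ) + 1 : ℕ) : ℝ)) := by
      rw [Real.rpow_natCast, ENNReal.ofReal_pow hn0.le, ENNReal.ofReal_natCast]
    rw [e4, hh]
    show ENNReal.ofReal ((n : ℝ) ^ (((k : ℕ) + 1 : ℕ) : ℝ)) *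
      (K ^ k * ENNReal.ofReal ((n:ℝ) ^ (-(2*q) * (k:ℕ)))) = K ^ k * ENNReal.ofReal ((n:ℝ) ^ δ)
    rw [mul_comm (K ^ k), ← mul_assoc, ← ENNReal.ofReal_mul (by positivity),
      ← Real.rpow_add hn0, mul_comm]
    congr 2
    push_cast
    rw [hδ]; ring
  have hzero : ∀ᶠ n : ℕ in Filter.atTop, (0 : ℝ≥0∞) ≤
      ∫⁻ P, (emBetti (rggGraph A ((n : ℝ) ^ (-q)) P) k : ℝ≥0∞) ∂ rggSample A n :=
    Filter.Eventually.of_forall fun n => zero_le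
  exact tendsto_of_tendsto_of_tendsto_of_le_of_le' tendsto_const_nhds hhten hzero hev
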